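/- Let p be a prime with Legendre symbol (p/5) = −1, and let k ≥ 1 with (p,k) ≠ (2,1). Let S be the set of characteristic factors of F_{p^k}, i.e. the set of primes q such that q ∣ F_{p^k} and q ∤ F_m for all 1 ≤ m < p^k. Then ∏_{q ∈ S} (q/5)^{v_q(F_{p^k})} = −1, where (q/5) is the Legendre symbol and v_q(F_{p^k}) is the q-adic valuation of F_{p^k}; in other words, F_{p^k} has an odd number of characteristic factors q with (q/5) = −1, counted with multiplicity (in particular, at least one). -/

import Mathlib

open scoped Classical

open Nat Polynomial

lemma fib_zmod5_period : ∀ n : ℕ, ((fib (n+20) : ZMod 5)) = (fib n : ZMod 5) := by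
  intro n
  induction n using Nat.twoStepInduction with
  | zero => decide
  | one => decide
  | more n ih1 ih2 =>
    have h1 := Nat.fib_add_two (n := n + 20)
    have h2 := Nat.fib_add_two (n := n)
    have e : n+2+20 = n+20+2 := by omega
    have e2 : n+20+1 = n+1+20 := by omega
    rw [e, h1, h2, Nat.cast_add, Nat.cast_add, e2, ih1, ih2]

lemma fib_zmod5_mod (n : ℕ) : ((fib n : ZMod 5)) = (fib (n % 20) : ZMod 5) := by
  induction n using Nat.strong_induction_on with
  | _ n ih =>
    rcases lt_or_ge n 20 with h | h
    · rw [Nat.mod_eq_of_lt h]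
    · have h1 : n = (n - 20) + 20 := by omega
      rw [h1, fib_zmod5_period, ih (n-20) (by omega)]
      have : (n - 20 + 20) % 20 = (n-20) % 20 := by omega
      rw [this]

lemma jacobi_fib (n : ℕ) :
    jacobiSym (fib n : ℤ) 5 = (-1)^(n+1) * jacobiSym (n : ℤ) 5 := by
  have hmod : Nat.fib n % 5 = Nat.fib (n % 20) % 5 := by
    have := fib_zmod5_mod n
    rwa [ZMod.natCast_eq_natCast_iff] at this
  have h1 : jacobiSym (fib n : ℤ) 5 = jacobiSym (fib (n % 20) : ℤ) 5 :=
    jacobiSym.mod_left' (by omega)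
  have h2 : jacobiSym (n : ℤ) 5 = jacobiSym ((n % 20 : ℕ) : ℤ) 5 :=
    jacobiSym.mod_left' (by omega)
  have h3 : ((-1 : ℤ))^(n+1) = (-1)^(n % 20 + 1) := by
    rcases Nat.even_or_odd (n+1) with he | ho
    · have he' := Nat.even_iff.1 he
      rw [he.neg_one_pow, (Nat.even_iff.2 (by omega : (n % 20 + 1) % 2 = 0)).neg_one_pow]
    · have ho' := Nat.odd_iff.1 ho
      rw [ho.neg_one_pow, (Nat.odd_iff.2 (by omega : (n % 20 + 1) % 2 = 1)).neg_one_pow]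
  rw [h1, h2, h3]
  have hr20 : n % 20 < 20 := Nat.mod_lt _ (by norm_num)
  set r := n % 20 with hr
  clear_value r
  interval_cases r <;> norm_num

lemma fib_cong2 (n : ℕ) (hn : 1 ≤ n) : ∀ m : ℕ, ∃ d : ℤ,
    (fib (m*n+1) : ℤ) = (fib (n+1) : ℤ)^m + d * fib n := by
  intro m
  induction m with
  | zero => exact ⟨0, by norm_num⟩
  | succ m ih =>
    obtain ⟨d, hd⟩ := ih
    obtain ⟨c, hc⟩ : ∃ c : ℕ, fib (m*n) = fib n * c :=
      (Nat.fib_dvd n (m*n) ⟨m, by ring⟩)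
    have key : fib ((m+1)*n+1) = fib (m*n) * fib n + fib (m*n+1) * fib (n+1) := by
      have := Nat.fib_add (m*n) n
      rw [show m*n + n + 1 = (m+1)*n+1 by ring] at this
      exact this
    refine ⟨c * fib n * 1 + d * fib (n+1), ?_⟩
    have : ((fib ((m+1)*n+1) : ℤ)) = (fib (m*n) : ℤ) * fib n + (fib (m*n+1) : ℤ) * fib (n+1) := by
      exact_mod_cast congrArg (Nat.cast : ℕ → ℤ) key
    rw [this, hd]
    have hc' : (fib (m*n) : ℤ) = (fib n : ℤ) * c := by exact_mod_cast congrArg (Nat.cast : ℕ → ℤ) hc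
    rw [hc']
    ring

lemma fib_cong1 (n : ℕ) (hn : 1 ≤ n) : ∀ m : ℕ, ∃ c : ℤ,
    (fib ((m+1)*n) : ℤ) = (m+1) * fib n * (fib (n+1) : ℤ)^m + c * (fib n : ℤ)^2 := by
  intro m
  induction m with
  | zero => exact ⟨0, by norm_num⟩
  | succ m ih =>
    obtain ⟨c, hc⟩ := ih
    obtain ⟨d, hd⟩ := fib_cong2 n hn (m+1)
    have key : fib ((m+2)*n) = fib ((m+1)*n) * fib (n-1) + fib ((m+1)*n+1) * fib n := by
      have := Nat.fib_add ((m+1)*n) (n-1)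
      rw [show (m+1)*n + (n-1) + 1 = (m+2)*n by rw [show (m+1)*n + (n-1) + 1 = (m+1)*n + n by omega]; ring,
          show (n-1) + 1 = n by omega] at this
      exact this
    have hfn1 : (fib (n-1) : ℤ) = (fib (n+1) : ℤ) - fib n := by
      have : fib (n+1) = fib (n-1) + fib n := by
        have := Nat.fib_add_two (n := n-1)
        rw [show n-1+2 = n+1 by omega, show n-1+1 = n by omega] at this
        omega
      push_cast [this]; ring
    refine ⟨c * ((fib (n+1) : ℤ) - fib n) - (m+1) * (fib (n+1):ℤ)^m + d, ?_⟩
    have keyZ : ((fib ((m+2)*n) : ℤ)) = (fib ((m+1)*n) : ℤ) * fib (n-1) + (fib ((m+1)*n+1) : ℤ) * fib n := by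
      exact_mod_cast congrArg (Nat.cast : ℕ → ℤ) key
    rw [keyZ, hc, hd, hfn1]
    push_cast
    ring

section
variable (p : ℕ) [Fact p.Prime]

noncomputable def qpoly : (ZMod p)[X] := X^2 - X - 1

lemma qpoly_monic : (qpoly p).Monic := by
  have : (qpoly p) = X^(1+1) - (X + C 1) := by unfold qpoly; simp; ring
  rw [this]
  exact Polynomial.monic_X_pow_sub (by rw [Polynomial.degree_X_add_C]; norm_num)

lemma qpoly_degree : (qpoly p).degree = 2 := by
  have : (qpoly p) = C 1 * X^2 + C (-1) * X + C (-1) := by unfold qpoly; simp; ring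
  rw [this, Polynomial.degree_quadratic one_ne_zero]

noncomputable def phi : AdjoinRoot (qpoly p) := AdjoinRoot.root (qpoly p)

lemma phi_sq : (phi p)^2 = phi p + 1 := by
  have h := AdjoinRoot.eval₂_root (qpoly p)
  unfold qpoly at h
  simp only [Polynomial.eval₂_sub, Polynomial.eval₂_pow, Polynomial.eval₂_X,
    Polynomial.eval₂_one] at h
  have h2 : (phi p)^2 - phi p - 1 = 0 := h
  linear_combination h2

lemma coeff_ext (a b : ZMod p)
    (h : (AdjoinRoot.of (qpoly p)) a * phi p + (AdjoinRoot.of (qpoly p)) b = 0) :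
    a = 0 ∧ b = 0 := by
  have hmk : AdjoinRoot.mk (qpoly p) (C a * X + C b) = 0 := by
    rw [map_add, map_mul, AdjoinRoot.mk_C, AdjoinRoot.mk_C, AdjoinRoot.mk_X]
    exact h
  rw [AdjoinRoot.mk_eq_zero] at hmk
  have hz : C a * X + C b = 0 := by
    by_contra hne
    have h1 := Polynomial.degree_le_of_dvd hmk hne
    rw [qpoly_degree] at h1
    have h2 := Polynomial.degree_linear_le (a := a) (b := b)
    have h3 : (2 : WithBot ℕ) ≤ 1 := le_trans h1 h2
    norm_num at h3
  constructor
  · have := congrArg (fun r => Polynomial.coeff r 1) hz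
    simpa using this
  · have := congrArg (fun r => Polynomial.coeff r 0) hz
    simpa using this

noncomputable instance : Nontrivial (AdjoinRoot (qpoly p)) :=
  AdjoinRoot.nontrivial _ (by rw [qpoly_degree]; norm_num)

lemma charRr : CharP (AdjoinRoot (qpoly p)) p :=
  charP_of_injective_ringHom (AdjoinRoot.of (qpoly p)).injective p

lemma fib_phi : ∀ n : ℕ, (phi p)^(n+1)
    = (fib (n+1) : AdjoinRoot (qpoly p)) * phi p + (fib n : AdjoinRoot (qpoly p)) := by
  intro n
  induction n with
  | zero => simp
  | succ n ih =>
    have hfib : (fib (n+2) : AdjoinRoot (qpoly p))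
        = (fib n : AdjoinRoot (qpoly p)) + (fib (n+1) : AdjoinRoot (qpoly p)) := by
      rw [Nat.fib_add_two]; push_cast; ring
    calc (phi p)^(n+1+1) = (phi p)^(n+1) * phi p := by rw [pow_succ]
      _ = ((fib (n+1) : AdjoinRoot (qpoly p)) * phi p + (fib n : AdjoinRoot (qpoly p))) * phi p := by
          rw [ih]
      _ = (fib (n+1) : AdjoinRoot (qpoly p)) * (phi p)^2
            + (fib n : AdjoinRoot (qpoly p)) * phi p := by ring
      _ = _ := by rw [phi_sq, hfib]; ring
end

lemma p_dvd_fib_succ (p : ℕ) (hp : p.Prime) (hodd : p ≠ 2)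
    (hp5 : jacobiSym (p : ℤ) 5 = -1) : p ∣ fib (p+1) := by
  haveI : Fact p.Prime := ⟨hp⟩
  haveI := charRr p
  have hoddp : Odd p := hp.odd_of_ne_two hodd
  have hleg : legendreSym p 5 = -1 := by
    rw [jacobiSym.legendreSym.to_jacobiSym]
    rw [show ((5:ℤ)) = ((5:ℕ):ℤ) by norm_num,
      jacobiSym.quadratic_reciprocity_one_mod_four (by norm_num) hoddp]
    exact_mod_cast hp5
  have heuler : (((5:ℕ) : ZMod p))^(p/2) = -1 := by
    have h := legendreSym.eq_pow p 5
    rw [hleg] at h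
    have : ((5:ℤ) : ZMod p) ^ (p/2) = -1 := by exact_mod_cast h.symm
    exact_mod_cast this
  set ph : AdjoinRoot (qpoly p) := phi p with hphidef
  have hph := phi_sq p
  set dl : AdjoinRoot (qpoly p) := 2*ph - 1 with hddef
  have hdl2 : dl^2 = ((5:ℕ) : AdjoinRoot (qpoly p)) := by
    rw [hddef]; push_cast; linear_combination (4 : AdjoinRoot (qpoly p)) * hph
  have h5R : (((5:ℕ) : AdjoinRoot (qpoly p)))^(p/2) = -1 := by
    have := congrArg (AdjoinRoot.of (qpoly p)) heuler
    rw [map_pow, map_neg, map_one, map_natCast] at this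
    exact this
  have hp21 : 2 * (p/2) + 1 = p := by
    obtain ⟨m, hm⟩ := hoddp; omega
  have hdlp : dl^p = -dl := by
    calc dl^p = dl^(2*(p/2)) * dl := by rw [← pow_succ, hp21]
      _ = (dl^2)^(p/2) * dl := by rw [← pow_mul]
      _ = -dl := by rw [hdl2, h5R]; ring
  have hfrob : (2*ph + (-1))^p = (2*ph)^p + (-1)^p := add_pow_char _ _ p
  have h2p : (((2:ℕ) : AdjoinRoot (qpoly p)))^p = ((2:ℕ) : AdjoinRoot (qpoly p)) := by
    have h2 : (((2:ℕ) : ZMod p))^p = ((2:ℕ) : ZMod p) := ZMod.pow_card _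
    have := congrArg (AdjoinRoot.of (qpoly p)) h2
    simp only [map_pow, map_natCast] at this
    exact this
  have h2p' : ((2 : AdjoinRoot (qpoly p)))^p = 2 := by
    have := h2p; push_cast at this; exact this
  have hneg1p : ((-1 : AdjoinRoot (qpoly p)))^p = -1 := hoddp.neg_one_pow
  have hphip : ph^p = (fib p : AdjoinRoot (qpoly p)) * ph + (fib (p-1) : AdjoinRoot (qpoly p)) := by
    have := fib_phi p (p-1)
    rw [show p - 1 + 1 = p by omega] at this
    exact this
  have key : ((2 * fib p + 2 : ℕ) : AdjoinRoot (qpoly p)) * ph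
      + (((2 * fib (p-1) : ℕ) : AdjoinRoot (qpoly p)) - 2) = 0 := by
    have e1 : (2*ph + (-1))^p = 2 * ph^p - 1 := by
      rw [hfrob, mul_pow, h2p', hneg1p]; ring
    have e2 : (2*ph + (-1))^p = -dl := by
      rw [show 2*ph + (-1) = dl by rw [hddef]; ring, hdlp]
    rw [e1, hphip, hddef] at e2
    push_cast
    linear_combination e2
  have key2 : (AdjoinRoot.of (qpoly p)) (((2 * fib p + 2 : ℕ) : ZMod p)) * ph
      + (AdjoinRoot.of (qpoly p)) (((2 * fib (p-1) : ℕ) : ZMod p) - 2) = 0 := by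
    rw [show (2 : ZMod p) = ((2:ℕ) : ZMod p) by push_cast; ring]
    simp only [map_sub, map_natCast]
    push_cast
    push_cast at key
    linear_combination key
  obtain ⟨hA, hB⟩ := coeff_ext p _ _ key2
  have h2ne : (2 : ZMod p) ≠ 0 := by
    have hnd : ¬ (p ∣ 2) := fun hd => hodd ((Nat.prime_dvd_prime_iff_eq hp Nat.prime_two).mp hd)
    rw [show (2 : ZMod p) = ((2:ℕ) : ZMod p) by push_cast; ring]
    rw [Ne, ZMod.natCast_eq_zero_iff]
    exact hnd
  have hfp : (fib p : ZMod p) = -1 := by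
    have hA' : (2 : ZMod p) * ((fib p : ZMod p) + 1) = 0 := by push_cast at hA ⊢; linear_combination hA
    rcases mul_eq_zero.mp hA' with h | h
    · exact absurd h h2ne
    · linear_combination h
  have hfp1 : (fib (p-1) : ZMod p) = 1 := by
    have hB' : (2 : ZMod p) * ((fib (p-1) : ZMod p) - 1) = 0 := by push_cast at hB ⊢; linear_combination hB
    rcases mul_eq_zero.mp hB' with h | h
    · exact absurd h h2ne
    · linear_combination h
  have hsum : ((fib (p+1) : ℕ) : ZMod p) = 0 := by
    have hn : fib (p+1) = fib (p-1) + fib p := by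
      have := Nat.fib_add_two (n := p-1)
      rw [show p-1+2 = p+1 by omega, show p-1+1 = p by omega] at this
      exact this
    rw [hn]
    push_cast
    rw [hfp, hfp1]
    ring
  rwa [ZMod.natCast_eq_zero_iff] at hsum

lemma not_p_dvd_fib_pow (p : ℕ) (hp : p.Prime) (hdiv : p ∣ fib (p+1)) (j : ℕ) :
    ¬ p ∣ fib (p^j) := by
  intro h
  have h1 : p ∣ Nat.gcd (fib (p^j)) (fib (p+1)) := Nat.dvd_gcd h hdiv
  rw [← Nat.fib_gcd] at h1
  obtain ⟨i, hik, hgi⟩ := (Nat.dvd_prime_pow hp).1 (Nat.gcd_dvd_left (p^j) (p+1))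
  have hp2 := hp.two_le
  rcases Nat.eq_zero_or_pos i with rfl | hi
  · rw [hgi, pow_zero] at h1
    simp at h1
    omega
  · have hpg : p ∣ Nat.gcd (p^j) (p+1) := by
      rw [hgi]; exact dvd_pow_self p (by omega)
    have hd1 : p ∣ p + 1 := hpg.trans (Nat.gcd_dvd_right _ _)
    have hd2 : p ∣ 1 := by simpa using Nat.dvd_sub hd1 (dvd_refl p)
    simp at hd2
    omega

lemma not_five_dvd_fib (m : ℕ) (hm : ¬ 5 ∣ m) : ¬ 5 ∣ fib m := by
  intro h
  have h5 : (5:ℕ) ∣ fib 5 := by decide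
  have h1 : 5 ∣ Nat.gcd (fib m) (fib 5) := Nat.dvd_gcd h h5
  rw [← Nat.fib_gcd] at h1
  have hg : Nat.gcd m 5 ∣ 5 := Nat.gcd_dvd_right _ _
  rcases (Nat.Prime.eq_one_or_self_of_dvd (by norm_num) _ hg) with h2 | h2
  · rw [h2] at h1; simp at h1
  · exact hm (h2 ▸ Nat.gcd_dvd_left m 5)

lemma jacobi_prod {ι : Type*} (s : Finset ι) (f : ι → ℤ) (b : ℕ) :
    jacobiSym (∏ i ∈ s, f i) b = ∏ i ∈ s, jacobiSym (f i) b := by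
  classical
  induction s using Finset.induction with
  | empty => simp
  | insert _ _ h ih =>
    rw [Finset.prod_insert h, Finset.prod_insert h, jacobiSym.mul_left, ih]

lemma prod_jacobi_eq (G : ℕ) (hG : G ≠ 0) :
    (∏ q ∈ G.primeFactors, (jacobiSym (q:ℤ) 5)^(padicValNat q G)) = jacobiSym (G:ℤ) 5 := by
  conv_rhs => rw [← Nat.factorization_prod_pow_eq_self hG]
  rw [Nat.prod_factorization_eq_prod_primeFactors]
  push_cast
  rw [jacobi_prod]
  apply Finset.prod_congr rfl
  intro q hq
  rw [jacobiSym.pow_left]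
  congr 1
  exact (Nat.factorization_def G (Nat.prime_of_mem_primeFactors hq)).symm

theorem stmt_18 (p : ℕ) (hp : p.Prime)
    (hp5 : jacobiSym (p : ℤ) 5 = -1) (k : ℕ) (hk : 1 ≤ k)
    (hexc : ¬ (p = 2 ∧ k = 1)) :
    (∏ q ∈ (Nat.fib (p ^ k)).primeFactors.filter
        (fun q => ∀ m : ℕ, 1 ≤ m → m < p ^ k → ¬ q ∣ Nat.fib m),
      (jacobiSym (q : ℤ) 5) ^ (padicValNat q (Nat.fib (p ^ k)))) = -1 := by
  have hp2 := hp.two_le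
  have hp5' : p ≠ 5 := by rintro rfl; norm_num at hp5
  set N := p^k with hN
  set n := p^(k-1) with hn
  have hpn : N = p * n := by
    rw [hN, hn, ← pow_succ']
    congr 1
    omega
  have hn1 : 1 ≤ n := Nat.one_le_iff_ne_zero.2 (pow_ne_zero _ (by omega))
  have hnN : n < N := by
    rw [hpn]
    calc n = 1 * n := (one_mul n).symm
    _ < p * n := by
      apply Nat.mul_lt_mul_of_lt_of_le (by omega) le_rfl
      omega
  have hN1 : 1 ≤ N := by omega
  have hdivp : p ∣ fib (p+1) := by
    rcases eq_or_ne p 2 with rfl | hodd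
    · decide
    · exact p_dvd_fib_succ p hp hodd hp5
  have hpdvd : ∀ j : ℕ, ¬ p ∣ fib (p^j) := not_p_dvd_fib_pow p hp hdivp
  have h5n : ¬ 5 ∣ n := by
    intro h
    exact hp5' ((Nat.prime_dvd_prime_iff_eq (by norm_num) hp).1
      ((Nat.Prime.dvd_of_dvd_pow (by norm_num) h))).symm
  have h5N : ¬ 5 ∣ N := by
    intro h
    exact hp5' ((Nat.prime_dvd_prime_iff_eq (by norm_num) hp).1
      ((Nat.Prime.dvd_of_dvd_pow (by norm_num) h))).symm
  have h5fn : ¬ 5 ∣ fib n := not_five_dvd_fib n h5n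
  have hfn_pos : 0 < fib n := Nat.fib_pos.2 (by omega)
  have hfN_pos : 0 < fib N := Nat.fib_pos.2 (by omega)
  have hdvd : fib n ∣ fib N := Nat.fib_dvd _ _ ⟨p, by rw [hpn]; ring⟩
  obtain ⟨G, hG⟩ := hdvd
  have hGpos : G ≠ 0 := by rintro rfl; simp at hG; omega
  -- express G over ℤ
  obtain ⟨c, hc⟩ := fib_cong1 n hn1 (p-1)
  rw [show (p-1)+1 = p by omega] at hc
  rw [show ((p-1:ℕ) : ℤ) + 1 = (p:ℤ) by omega] at hc
  have hGZ : (G:ℤ) = p * (fib (n+1):ℤ)^(p-1) + c * fib n := by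
    have h1 : (G:ℤ) * fib n = (p * (fib (n+1):ℤ)^(p-1) + c * fib n) * fib n := by
      have h2 : ((fib N : ℕ) : ℤ) = (fib n : ℤ) * (G:ℤ) := by exact_mod_cast hG
      rw [hpn] at h2
      push_cast at hc h2 ⊢
      linear_combination hc - h2
    exact mul_right_cancel₀ (by exact_mod_cast hfn_pos.ne') h1
  -- coprimality of G and fib n
  have hcop : Nat.Coprime G (fib n) := by
    by_contra hnc
    obtain ⟨q, hq, hqd⟩ := Nat.exists_prime_and_dvd hnc
    have hqG : q ∣ G := hqd.trans (Nat.gcd_dvd_left _ _)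
    have hqf : q ∣ fib n := hqd.trans (Nat.gcd_dvd_right _ _)
    have hqZ : (q:ℤ) ∣ p * (fib (n+1):ℤ)^(p-1) := by
      have h1 : (q:ℤ) ∣ G := Int.natCast_dvd_natCast.2 hqG
      have h2 : (q:ℤ) ∣ fib n := Int.natCast_dvd_natCast.2 hqf
      have := dvd_sub h1 (Dvd.dvd.mul_left h2 c)
      rwa [hGZ, add_sub_cancel_right] at this
    have hqp : Prime (q:ℤ) := Nat.prime_iff_prime_int.1 hq
    rcases hqp.dvd_mul.1 hqZ with h | h
    · have : q ∣ p := Int.natCast_dvd_natCast.1 h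
      have : q = p := (Nat.prime_dvd_prime_iff_eq hq hp).1 this
      subst this
      exact hpdvd (k-1) hqf
    · have hqf1 : q ∣ fib (n+1) :=
        Int.natCast_dvd_natCast.1 (hqp.dvd_of_dvd_pow h)
      have : q ∣ Nat.gcd (fib n) (fib (n+1)) := Nat.dvd_gcd hqf hqf1
      rw [Nat.fib_coprime_fib_succ n] at this
      exact hq.ne_one (Nat.dvd_one.1 this)
  -- set equality
  have hset : (fib N).primeFactors.filter
      (fun q => ∀ m : ℕ, 1 ≤ m → m < N → ¬ q ∣ fib m) = G.primeFactors := by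
    ext q
    simp only [Finset.mem_filter, Nat.mem_primeFactors]
    constructor
    · rintro ⟨⟨hq, hqd, -⟩, hchar⟩
      refine ⟨hq, ?_, hGpos⟩
      have hqn : ¬ q ∣ fib n := hchar n hn1 hnN
      rcases (Nat.Prime.dvd_mul hq).1 (hG ▸ hqd) with h | h
      · exact absurd h hqn
      · exact h
    · rintro ⟨hq, hqG, -⟩
      have hqN : q ∣ fib N := hG ▸ Dvd.dvd.mul_left hqG (fib n)
      refine ⟨⟨hq, hqN, by omega⟩, ?_⟩
      intro m hm1 hmN hqm
      have h1 : q ∣ Nat.gcd (fib m) (fib N) := Nat.dvd_gcd hqm hqN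
      rw [← Nat.fib_gcd] at h1
      obtain ⟨i, hik, hgi⟩ := (Nat.dvd_prime_pow hp).1 (Nat.gcd_dvd_right m N)
      have hik1 : i ≤ k - 1 := by
        by_contra hgt
        have hik' : i = k := by omega
        rw [hik'] at hgi
        have hNm : N ∣ m := by
          rw [hN, ← hgi]; exact Nat.gcd_dvd_left m N
        have := Nat.le_of_dvd (by omega) hNm
        omega
      have hgn : Nat.gcd m N ∣ n := by
        rw [hgi, hn]; exact pow_dvd_pow p hik1
      have hqfn : q ∣ fib n := h1.trans (Nat.fib_dvd _ _ hgn)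
      have : q ∣ Nat.gcd G (fib n) := Nat.dvd_gcd hqG hqfn
      rw [hcop] at this
      exact hq.ne_one (Nat.dvd_one.1 this)
  -- exponents
  have hval : ∀ q ∈ G.primeFactors, padicValNat q (fib N) = padicValNat q G := by
    intro q hq
    have hqp := Nat.prime_of_mem_primeFactors hq
    haveI : Fact q.Prime := ⟨hqp⟩
    have hqG := Nat.dvd_of_mem_primeFactors hq
    have h1 : padicValNat q (fib N) = padicValNat q (fib n) + padicValNat q G := by
      rw [hG]; exact padicValNat.mul (by omega) hGpos
    have hqn : ¬ q ∣ fib n := by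
      intro hd
      have : q ∣ Nat.gcd G (fib n) := Nat.dvd_gcd hqG hd
      rw [hcop] at this
      exact hqp.ne_one (Nat.dvd_one.1 this)
    rw [h1, padicValNat.eq_zero_of_not_dvd hqn, zero_add]
  rw [hset, Finset.prod_congr rfl (fun q hq => by rw [hval q hq]), prod_jacobi_eq G hGpos]
  -- final computation
  have hcop5 : Nat.Coprime (fib n) 5 := by
    rw [Nat.coprime_comm]
    exact (Nat.Prime.coprime_iff_not_dvd (by norm_num)).2 h5fn
  have hsq : jacobiSym (fib n : ℤ) 5 ^ 2 = 1 := by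
    apply jacobiSym.sq_one
    simpa [Int.gcd] using hcop5
  have hcopn5 : Nat.Coprime n 5 := by
    rw [Nat.coprime_comm]
    exact (Nat.Prime.coprime_iff_not_dvd (by norm_num)).2 h5n
  have hsqn : jacobiSym (n : ℤ) 5 ^ 2 = 1 := by
    apply jacobiSym.sq_one
    simpa [Int.gcd] using hcopn5
  have hJ : jacobiSym (fib N : ℤ) 5 = jacobiSym (fib n :ℤ) 5 * jacobiSym (G:ℤ) 5 := by
    rw [hG]; push_cast; rw [jacobiSym.mul_left]
  have e : jacobiSym (G:ℤ) 5 = jacobiSym (fib N:ℤ) 5 * jacobiSym (fib n:ℤ) 5 := by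
    rw [hJ]
    linear_combination (-(jacobiSym (G:ℤ) 5)) * hsq
  have hJN : jacobiSym (N:ℤ) 5 = jacobiSym (p:ℤ) 5 * jacobiSym (n:ℤ) 5 := by
    rw [hpn]; push_cast; rw [jacobiSym.mul_left]
  have hpar : Even (N + n) := by
    rcases eq_or_ne p 2 with rfl | hodd
    · have hk2 : 2 ≤ k := by
        rcases Nat.lt_or_ge k 2 with h | h
        · interval_cases k
          · exact absurd ⟨rfl, rfl⟩ hexc
        · exact h
      have h1 : Even N := (Nat.even_pow).2 ⟨even_two, by omega⟩
      have h2 : Even n := (Nat.even_pow).2 ⟨even_two, by omega⟩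
      exact h1.add h2
    · have hop : Odd p := hp.odd_of_ne_two hodd
      have h1 : Odd N := hop.pow
      have h2 : Odd n := hop.pow
      exact Odd.add_odd h1 h2
  have hpow : ((-1:ℤ))^(N+1) * (-1)^(n+1) = 1 := by
    obtain ⟨t, ht⟩ := hpar
    rw [← pow_add, show (N+1) + (n+1) = 2*(t+1) by omega, pow_mul]
    norm_num
  rw [e, jacobi_fib N, jacobi_fib n, hJN]
  calc ((-1:ℤ))^(N+1) * (jacobiSym (p:ℤ) 5 * jacobiSym (n:ℤ) 5) * ((-1)^(n+1) * jacobiSym (n:ℤ) 5)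
      = ((-1:ℤ))^(N+1) * (-1)^(n+1) * jacobiSym (p:ℤ) 5 * (jacobiSym (n:ℤ) 5)^2 := by ring
    _ = -1 := by rw [hpow, hsqn, hp5]; ring
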